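/- Let G be a group and u, v two commuting elements satisfying u^{s1} = v^{-s2} and v^{s1} = u^{-(s1+s2)} for nonnegative integers s1, s2 not both zero. Then v^{gcd(s1,s2)} lies in the cyclic subgroup ⟨u⟩, and consequently every element of ⟨u, v⟩ can be written as u^i v^j with 0 ≤ j < gcd(s1,s2). -/
import Mathlib


theorem stmt_1 {G : Type*} [Group G] (u v : G) (huv : Commute u v)
    (s1 s2 : ℕ) (hs : (s1, s2) ≠ (0, 0))
    (h1 : u ^ s1 = (v ^ s2)⁻¹) (h2 : v ^ s1 = (u ^ (s1 + s2))⁻¹) :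
    v ^ Nat.gcd s1 s2 ∈ Subgroup.zpowers u ∧
      ∀ w ∈ Subgroup.closure ({u, v} : Set G),
        ∃ (i : ℤ) (j : ℕ), j < Nat.gcd s1 s2 ∧ w = u ^ i * v ^ j := by
  have hc : ∀ a b : ℤ, v ^ a * u ^ b = u ^ b * v ^ a := fun a b =>
    ((huv.zpow_zpow b a).symm).eq
  have hg : 0 < Nat.gcd s1 s2 := by
    rcases Nat.eq_zero_or_pos (Nat.gcd s1 s2) with h | h
    · exfalso; apply hs
      have := Nat.eq_zero_of_gcd_eq_zero_left h
      have := Nat.eq_zero_of_gcd_eq_zero_right h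
      simp_all
    · exact h
  -- v ^ s2 and v ^ s1 are in zpowers u
  have hv2 : v ^ (s2 : ℤ) = u ^ (-(s1 : ℤ)) := by
    rw [zpow_neg, zpow_natCast, zpow_natCast, h1, inv_inv]
  have hv1 : v ^ (s1 : ℤ) = u ^ (-((s1 : ℤ) + s2)) := by
    rw [zpow_neg, zpow_natCast, ← Nat.cast_add, zpow_natCast, h2]
  have hvg : ∃ k : ℤ, v ^ (Nat.gcd s1 s2 : ℤ) = u ^ k := by
    have hb := Int.gcd_eq_gcd_ab (s1 : ℤ) (s2 : ℤ)
    have hgc : (Int.gcd (s1 : ℤ) (s2 : ℤ) : ℤ) = (Nat.gcd s1 s2 : ℤ) := by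
      simp [Int.gcd]
    refine ⟨(-((s1 : ℤ) + s2)) * Int.gcdA s1 s2 + (-(s1 : ℤ)) * Int.gcdB s1 s2, ?_⟩
    rw [← hgc, hb, zpow_add, zpow_mul, zpow_mul, hv1, hv2, zpow_add, zpow_mul, zpow_mul]
  obtain ⟨k, hk⟩ := hvg
  constructor
  · refine ⟨k, ?_⟩
    show u ^ k = v ^ Nat.gcd s1 s2
    rw [← hk, zpow_natCast]
  · have key : ∀ w ∈ Subgroup.closure ({u, v} : Set G),
        ∃ i j : ℤ, w = u ^ i * v ^ j := by
      intro w hw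
      induction hw using Subgroup.closure_induction with
      | mem x hx =>
        rcases hx with rfl | rfl
        · exact ⟨1, 0, by simp⟩
        · exact ⟨0, 1, by simp⟩
      | one => exact ⟨0, 0, by simp⟩
      | mul x y _ _ hx hy =>
        obtain ⟨i, j, rfl⟩ := hx
        obtain ⟨i', j', rfl⟩ := hy
        refine ⟨i + i', j + j', ?_⟩
        rw [zpow_add, zpow_add, mul_assoc, mul_assoc, ← mul_assoc (v ^ j), hc,
          mul_assoc]
      | inv x _ hx =>
        obtain ⟨i, j, rfl⟩ := hx
        refine ⟨-i, -j, ?_⟩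
        rw [mul_inv_rev, ← zpow_neg, ← zpow_neg, hc]
    intro w hw
    obtain ⟨i, j, rfl⟩ := key w hw
    set g : ℤ := (Nat.gcd s1 s2 : ℤ) with hgdef
    have hgpos : 0 < g := by rw [hgdef]; exact_mod_cast hg
    have hmod : 0 ≤ j % g := Int.emod_nonneg j (ne_of_gt hgpos)
    have hlt : j % g < g := Int.emod_lt_of_pos j hgpos
    refine ⟨i + k * (j / g), (j % g).toNat, ?_, ?_⟩
    · have hlt' : j % g < (Nat.gcd s1 s2 : ℤ) := by rw [← hgdef]; exact hlt
      omega
    · have hj : j = g * (j / g) + j % g := (Int.mul_ediv_add_emod j g).symm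
      calc u ^ i * v ^ j = u ^ i * (v ^ (g * (j / g)) * v ^ (j % g)) := by
            rw [← zpow_add, ← hj]
        _ = u ^ i * ((v ^ g) ^ (j / g) * v ^ (j % g)) := by rw [← zpow_mul]
        _ = u ^ i * ((u ^ k) ^ (j / g) * v ^ (j % g)) := by rw [hk]
        _ = u ^ (i + k * (j / g)) * v ^ (j % g) := by
            rw [← zpow_mul, ← mul_assoc, ← zpow_add]
        _ = u ^ (i + k * (j / g)) * v ^ ((j % g).toNat) := by
            rw [← zpow_natCast v ((j % g).toNat), Int.toNat_of_nonneg hmod]
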